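/- Let F : D → ℝ be a warping function whose weight w = (F⁻¹)′ satisfies w(x+y) ≤ C·w(x)·w(y) for all x,y ∈ ℝ, let 1 ≤ p < ∞ and X = L^p_w(ℝ). Then for every fixed f ∈ X, sup_{y∈ℝ} ‖f − E_{y,ε}f‖_X → 0 as ε → 0⁺; that is, the map ε ↦ sup_{y∈ℝ} ‖f − E_{y,ε}f‖_X is continuous at ε = 0. -/

import Mathlib

open MeasureTheory Filter Topology Set
open scoped ENNReal NNReal

noncomputable section

/-- A warping function `F : D → ℝ` (with `D = ℝ` or `D = (0,∞)`), bundled together with its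
inverse `Finv`, its derivative `F'` and the associated weight `w = (F⁻¹)'`.  The fields record:
bijectivity of `F : D → ℝ`, `F ∈ C¹(D)` with `F' > 0`, strict decrease of `F'` in `|t|`,
`w = (F⁻¹)'`, oddness of `F` when `D = ℝ`, and `v`-moderateness of `w` for some
submultiplicative weight `v`. -/
structure Warping where
  D : Set ℝ
  F : ℝ → ℝ
  Finv : ℝ → ℝ
  F' : ℝ → ℝ
  w : ℝ → ℝ
  hD : D = Set.univ ∨ D = Set.Ioi 0
  left_inv : ∀ x ∈ D, Finv (F x) = x
  mem_inv : ∀ s : ℝ, Finv s ∈ D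
  right_inv : ∀ s : ℝ, F (Finv s) = s
  F_hasDeriv : ∀ t ∈ D, HasDerivAt F (F' t) t
  F'_cont : ContinuousOn F' D
  F'_pos : ∀ t ∈ D, 0 < F' t
  F'_dec : ∀ t₀ ∈ D, ∀ t₁ ∈ D, |t₀| < |t₁| → F' t₁ < F' t₀
  w_hasDeriv : ∀ s : ℝ, HasDerivAt Finv (w s) s
  w_pos : ∀ s : ℝ, 0 < w s
  odd_of_univ : D = Set.univ → ∀ t, F (-t) = -F t
  moderate : ∃ (v : ℝ → ℝ) (C₀ : ℝ), (∀ x, 0 < v x) ∧ (∀ x y, v (x + y) ≤ v x * v y) ∧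
      ∀ x y, w (x + y) ≤ C₀ * v x * w y

/-- The frequency-side warped atom `g_x = √(F'(x)) · (T_{F(x)}θ) ∘ F` on `D`, extended by zero. -/
def gxFun (W : Warping) (θ : ℝ → ℂ) (x : ℝ) : ℝ → ℂ :=
  W.D.indicator fun t => (Real.sqrt (W.F' x) : ℂ) * θ (W.F t - W.F x)

/-- The Fourier transform of the warped time-frequency atom `g_{x,ξ} = T_ξ (ǧ_x)`:
`ĝ_{x,ξ}(t) = e^{-2πiξt} g_x(t)`. -/
def hatAtom (W : Warping) (θ : ℝ → ℂ) (x ξ : ℝ) : ℝ → ℂ := fun t =>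
  gxFun W θ x t * Complex.exp (-(2 * Real.pi * Complex.I * ξ * t))

/-- The warped time-frequency transform `V_{θ,F} f (x,ξ) = ⟨f, g_{x,ξ}⟩`, expressed on the
Fourier side (via Plancherel) in terms of `fh = f̂`:
`V_{θ,F} f (x,ξ) = ∫ f̂(t) conj(g_x(t)) e^{2πiξt} dt`. -/
def warpedTransform (W : Warping) (θ fh : ℝ → ℂ) (x ξ : ℝ) : ℂ :=
  ∫ t : ℝ, fh t * (starRingEnd ℂ) (gxFun W θ x t) * Complex.exp (2 * Real.pi * Complex.I * ξ * t)

/-- The operator `E_{y,ε}`: `(E_{y,ε}f)(t) = f(t) e^{2πiε(F⁻¹(t+y)−F⁻¹(y))/w(y)}`. -/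
def Eop (W : Warping) (y ε : ℝ) (f : ℝ → ℂ) : ℝ → ℂ := fun t =>
  f t * Complex.exp (2 * Real.pi * Complex.I * ε *
    (((W.Finv (t + y) - W.Finv y) / W.w y : ℝ) : ℂ))

/-- `‖e^{iθ} − 1‖ ≤ |θ|` for real `θ`. -/
lemma norm_exp_mul_I_sub_one_le (θ : ℝ) :
    ‖Complex.exp ((θ : ℂ) * Complex.I) - 1‖ ≤ |θ| := by
  have h1 : Complex.exp ((θ : ℂ) * Complex.I) - 1
      = ((Real.cos θ - 1 : ℝ) : ℂ) + ((Real.sin θ : ℝ) : ℂ) * Complex.I := by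
    rw [Complex.exp_mul_I, ← Complex.ofReal_cos, ← Complex.ofReal_sin]
    push_cast
    ring
  rw [h1, Complex.norm_add_mul_I]
  have hcos := Real.cos_le_one θ
  have hs : Real.sin (θ / 2) ^ 2 = (1 - Real.cos θ) / 2 := by
    have h2 : |Real.sin (θ / 2)| = Real.sqrt ((1 - Real.cos θ) / 2) := Real.abs_sin_half θ
    have h3 : Real.sin (θ / 2) ^ 2 = |Real.sin (θ / 2)| ^ 2 := (sq_abs _).symm
    rw [h3, h2, Real.sq_sqrt (by linarith)]
  have h4 : (Real.cos θ - 1) ^ 2 + Real.sin θ ^ 2 = (2 * Real.sin (θ / 2)) ^ 2 := by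
    have := Real.sin_sq_add_cos_sq θ
    nlinarith [hs]
  rw [h4, Real.sqrt_sq_eq_abs, abs_mul]
  have h5 : |Real.sin (θ / 2)| ≤ |θ / 2| := Real.abs_sin_le_abs
  rw [abs_div] at h5
  simp only [abs_two] at *
  nlinarith [abs_nonneg θ]

/-- `‖e^{iθ} − 1‖ ≤ 2` for real `θ`. -/
lemma norm_exp_mul_I_sub_one_le_two (θ : ℝ) :
    ‖Complex.exp ((θ : ℂ) * Complex.I) - 1‖ ≤ 2 := by
  calc ‖Complex.exp ((θ : ℂ) * Complex.I) - 1‖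
      ≤ ‖Complex.exp ((θ : ℂ) * Complex.I)‖ + ‖(1 : ℂ)‖ := norm_sub_le _ _
    _ = 2 := by rw [Complex.norm_exp_ofReal_mul_I, norm_one]; norm_num

lemma Warping.w_continuous (W : Warping) : Continuous W.w := by
  have hFinv : Continuous W.Finv :=
    continuous_iff_continuousAt.2 fun s => (W.w_hasDeriv s).continuousAt
  have hkey : ∀ s, W.F' (W.Finv s) * W.w s = 1 := by
    intro s
    have h1 : HasDerivAt (W.F ∘ W.Finv) (W.F' (W.Finv s) * W.w s) s :=
      (W.F_hasDeriv _ (W.mem_inv s)).comp s (W.w_hasDeriv s)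
    have h2 : W.F ∘ W.Finv = id := funext fun u => W.right_inv u
    rw [h2] at h1
    exact h1.unique (hasDerivAt_id s)
  have hne : ∀ s, W.F' (W.Finv s) ≠ 0 := fun s =>
    ne_of_gt (W.F'_pos _ (W.mem_inv s))
  have hcomp : Continuous fun s => W.F' (W.Finv s) :=
    W.F'_cont.comp_continuous hFinv W.mem_inv
  have : W.w = fun s => (W.F' (W.Finv s))⁻¹ := by
    funext s
    exact eq_inv_of_mul_eq_one_right (hkey s)
  rw [this]
  exact hcomp.inv₀ hne

lemma Warping.finv_sub_eq (W : Warping) (a b : ℝ) :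
    W.Finv b - W.Finv a = ∫ u in a..b, W.w u := by
  rw [intervalIntegral.integral_eq_sub_of_hasDerivAt
    (fun u _ => W.w_hasDeriv u) (W.w_continuous.intervalIntegrable a b)]

lemma Warping.key_bound (W : Warping) (C : ℝ)
    (hwsub : ∀ x y : ℝ, W.w (x + y) ≤ C * W.w x * W.w y) (y t : ℝ) :
    |W.Finv (t + y) - W.Finv y| ≤ C * W.w y * |W.Finv t - W.Finv 0| := by
  have hwc := W.w_continuous
  have hint : ∀ a b : ℝ, a ≤ b →
      W.Finv (b + y) - W.Finv (a + y) ≤ C * W.w y * (W.Finv b - W.Finv a) := by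
    intro a b hab
    rw [W.finv_sub_eq (a + y) (b + y), W.finv_sub_eq a b]
    have h1 : (∫ s in a..b, W.w (s + y)) = ∫ u in a + y..b + y, W.w u :=
      intervalIntegral.integral_comp_add_right (fun u => W.w u) y
    rw [← h1]
    have h2 : (∫ s in a..b, W.w (s + y)) ≤ ∫ s in a..b, (C * W.w y) * W.w s := by
      refine intervalIntegral.integral_mono_on hab
        ((hwc.comp (continuous_id.add continuous_const)).intervalIntegrable a b)
        ((continuous_const.mul hwc).intervalIntegrable a b) fun s _ => ?_
      calc W.w (s + y) ≤ C * W.w s * W.w y := hwsub s y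
        _ = (C * W.w y) * W.w s := by ring
    rw [intervalIntegral.integral_const_mul] at h2
    exact h2
  have hnn : ∀ a b : ℝ, a ≤ b → 0 ≤ W.Finv b - W.Finv a := by
    intro a b hab
    rw [W.finv_sub_eq a b]
    exact intervalIntegral.integral_nonneg hab fun u _ => (W.w_pos u).le
  rcases le_or_gt 0 t with ht | ht
  · have h1 := hint 0 t ht
    rw [zero_add] at h1
    rw [abs_of_nonneg (hnn y (t + y) (by linarith)),
      abs_of_nonneg (hnn 0 t ht)]
    exact h1
  · have h1 := hint t 0 ht.le
    rw [zero_add] at h1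
    rw [abs_of_nonpos (by linarith [hnn (t + y) y (by linarith)]),
      abs_of_nonpos (by linarith [hnn t 0 ht.le])]
    linarith

/-- Let `F : D → ℝ` be a warping function whose weight `w = (F⁻¹)'` satisfies
`w(x+y) ≤ C w(x) w(y)`, let `1 ≤ p < ∞` and `X = L^p_w(ℝ)`.  Then for every fixed `f ∈ X`,
`sup_{y∈ℝ} ‖f − E_{y,ε}f‖_X → 0` as `ε → 0⁺`. -/
theorem Eop_tendsto_zero
    (W : Warping) (C : ℝ)
    (hwsub : ∀ x y : ℝ, W.w (x + y) ≤ C * W.w x * W.w y)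
    (p : ℝ≥0∞) (hp : 1 ≤ p) (hp' : p ≠ ⊤)
    (f : ℝ → ℂ) (hf : MemLp (fun t : ℝ => W.w t • f t) p volume) :
    Tendsto (fun ε : ℝ =>
        ⨆ y : ℝ, eLpNorm (fun t : ℝ => W.w t • (f t - Eop W y ε f t)) p volume)
      (nhdsWithin 0 (Set.Ioi 0)) (nhds 0) := by
  have hp0 : p ≠ 0 := (zero_lt_one.trans_le hp).ne'
  set q := p.toReal with hq_def
  have hq : 0 < q := ENNReal.toReal_pos hp0 hp'
  have hC : 0 < C := by
    have h := hwsub 0 0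
    have h0 := W.w_pos 0
    rw [add_zero] at h
    nlinarith [mul_pos h0 h0]
  set Φ : ℝ → ℝ := fun t => |W.Finv t - W.Finv 0| with hΦdef
  have hΦc : Continuous Φ := by
    have : Continuous W.Finv :=
      continuous_iff_continuousAt.2 fun s => (W.w_hasDeriv s).continuousAt
    exact (this.sub continuous_const).abs
  have hΦ0 : ∀ t, 0 ≤ Φ t := fun t => abs_nonneg _
  have hmeas := hf.1
  set u := hmeas.mk _ with hu_def
  have hu_sm : StronglyMeasurable u := hmeas.stronglyMeasurable_mk
  have hu_ae : (fun t => W.w t • f t) =ᵐ[volume] u := hmeas.ae_eq_mk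
  set H : ℝ → ℝ → ℝ := fun ε t => ‖u t‖ * min 2 (2 * Real.pi * ε * (C * Φ t)) with hHdef
  -- pointwise bound
  have hpt : ∀ ε : ℝ, 0 ≤ ε → ∀ y t : ℝ,
      ‖W.w t • (f t - Eop W y ε f t)‖
        ≤ ‖W.w t • f t‖ * min 2 (2 * Real.pi * ε * (C * Φ t)) := by
    intro ε hε y t
    set r : ℝ := (W.Finv (t + y) - W.Finv y) / W.w y with hr
    set e : ℂ := Complex.exp (((2 * Real.pi * ε * r : ℝ) : ℂ) * Complex.I) with he
    have h1 : W.w t • (f t - Eop W y ε f t) = (W.w t • f t) * (1 - e) := by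
      have h2 : Eop W y ε f t = f t * e := by
        have harg : (2 * (Real.pi : ℂ) * Complex.I * (ε : ℂ) *
            (((W.Finv (t + y) - W.Finv y) / W.w y : ℝ) : ℂ))
            = ((2 * Real.pi * ε * r : ℝ) : ℂ) * Complex.I := by
          push_cast [hr]
          ring
        simp only [Eop, he, harg]
      rw [h2]
      calc W.w t • (f t - f t * e) = W.w t • (f t * (1 - e)) := by rw [mul_one_sub]
        _ = (W.w t • f t) * (1 - e) := (smul_mul_assoc _ _ _).symm
    rw [h1, norm_mul]
    refine mul_le_mul_of_nonneg_left ?_ (norm_nonneg _)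
    rw [norm_sub_rev]
    refine le_min (norm_exp_mul_I_sub_one_le_two _)
      ((norm_exp_mul_I_sub_one_le _).trans ?_)
    have hrb : |r| ≤ C * Φ t := by
      rw [hr, abs_div, abs_of_pos (W.w_pos y), div_le_iff₀ (W.w_pos y)]
      calc |W.Finv (t + y) - W.Finv y| ≤ C * W.w y * |W.Finv t - W.Finv 0| :=
            W.key_bound C hwsub y t
        _ = C * Φ t * W.w y := by rw [hΦdef]; ring
    have hpi : (0:ℝ) ≤ 2 * Real.pi * ε := by positivity
    calc |2 * Real.pi * ε * r| = 2 * Real.pi * ε * |r| := by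
          rw [abs_mul, abs_of_nonneg hpi]
      _ ≤ 2 * Real.pi * ε * (C * Φ t) := mul_le_mul_of_nonneg_left hrb hpi
  -- sup bound
  have hmono : ∀ ε ∈ Set.Ioi (0:ℝ),
      (⨆ y : ℝ, eLpNorm (fun t : ℝ => W.w t • (f t - Eop W y ε f t)) p volume)
        ≤ eLpNorm (H ε) p volume := by
    intro ε hε
    refine iSup_le fun y => ?_
    refine (eLpNorm_mono_real (hpt ε (le_of_lt hε) y)).trans_eq (eLpNorm_congr_ae ?_)
    filter_upwards [hu_ae] with t ht
    simp only [hHdef]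
    rw [ht]
  -- measurability
  have hHm : ∀ ε : ℝ, Measurable fun t => ((‖H ε t‖₊ : ℝ≥0) : ℝ≥0∞) ^ q := by
    intro ε
    have h1 : Measurable (H ε) := by
      refine (hu_sm.measurable.norm).mul ?_
      exact (continuous_const.min (continuous_const.mul (continuous_const.mul hΦc))).measurable
    exact ENNReal.continuous_rpow_const.measurable.comp h1.nnnorm.coe_nnreal_ennreal
  have humeas : Measurable fun t => ((‖u t‖₊ : ℝ≥0) : ℝ≥0∞) ^ q :=
    ENNReal.continuous_rpow_const.measurable.comp hu_sm.measurable.nnnorm.coe_nnreal_ennreal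
  -- finiteness of the dominating function
  have hufin : (∫⁻ t, ((‖u t‖₊ : ℝ≥0) : ℝ≥0∞) ^ q) ≠ ⊤ := by
    have h1 : eLpNorm u p volume < ⊤ := by
      rw [← eLpNorm_congr_ae hu_ae]; exact hf.2
    rw [eLpNorm_eq_lintegral_rpow_enorm_toReal hp0 hp'] at h1
    have h2 := (ENNReal.rpow_lt_top_iff_of_pos (by positivity : (0:ℝ) < 1/q)).1 h1
    exact h2.ne
  -- dominated convergence
  have hlim : Tendsto (fun ε : ℝ => ∫⁻ t, ((‖H ε t‖₊ : ℝ≥0) : ℝ≥0∞) ^ q)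
      (nhdsWithin 0 (Set.Ioi 0)) (𝓝 0) := by
    have hdct := tendsto_lintegral_filter_of_dominated_convergence
      (μ := volume) (l := nhdsWithin (0:ℝ) (Set.Ioi 0))
      (F := fun ε t => ((‖H ε t‖₊ : ℝ≥0) : ℝ≥0∞) ^ q)
      (f := fun _ => (0 : ℝ≥0∞))
      (bound := fun t => ((2 : ℝ≥0∞) * (‖u t‖₊ : ℝ≥0∞)) ^ q)
      (Eventually.of_forall hHm)
      ?_ ?_ ?_
    · simpa using hdct
    · -- bound
      filter_upwards [self_mem_nhdsWithin] with ε hε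
      refine Eventually.of_forall fun t => ?_
      refine ENNReal.rpow_le_rpow ?_ hq.le
      have hmin0 : (0:ℝ) ≤ min 2 (2 * Real.pi * ε * (C * Φ t)) :=
        le_min (by norm_num) (by have : (0:ℝ) < ε := hε; positivity)
      have hreal : ‖H ε t‖ ≤ 2 * ‖u t‖ := by
        simp only [hHdef]
        rw [norm_mul, Real.norm_eq_abs (min _ _), abs_of_nonneg hmin0, norm_norm]
        calc ‖u t‖ * min 2 (2 * Real.pi * ε * (C * Φ t)) ≤ ‖u t‖ * 2 :=
              mul_le_mul_of_nonneg_left (min_le_left _ _) (norm_nonneg _)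
          _ = 2 * ‖u t‖ := by ring
      have h2 : ‖H ε t‖₊ ≤ 2 * ‖u t‖₊ := by
        rw [← NNReal.coe_le_coe]
        push_cast [coe_nnnorm]
        exact hreal
      calc ((‖H ε t‖₊ : ℝ≥0) : ℝ≥0∞) ≤ ((2 * ‖u t‖₊ : ℝ≥0) : ℝ≥0∞) :=
            ENNReal.coe_le_coe.2 h2
        _ = (2 : ℝ≥0∞) * (‖u t‖₊ : ℝ≥0∞) := by push_cast; ring
    · -- finiteness
      have hrw : ∀ t, ((2 : ℝ≥0∞) * (‖u t‖₊ : ℝ≥0∞)) ^ q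
          = (2 : ℝ≥0∞) ^ q * ((‖u t‖₊ : ℝ≥0∞)) ^ q := fun t =>
        ENNReal.mul_rpow_of_nonneg _ _ hq.le
      simp_rw [hrw]
      rw [lintegral_const_mul _ humeas]
      exact ENNReal.mul_ne_top
        (ENNReal.rpow_ne_top_of_nonneg hq.le (by norm_num)) hufin
    · -- pointwise limit
      refine Eventually.of_forall fun t => ?_
      have hc : Tendsto (fun ε : ℝ => H ε t) (nhdsWithin 0 (Set.Ioi 0)) (𝓝 0) := by
        have hcont : Continuous fun ε : ℝ =>
            ‖u t‖ * min 2 (2 * Real.pi * ε * (C * Φ t)) := by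
          refine continuous_const.mul (continuous_const.min ?_)
          exact (continuous_const.mul continuous_id).mul continuous_const
        have h0 : ‖u t‖ * min 2 (2 * Real.pi * (0:ℝ) * (C * Φ t)) = 0 := by
          norm_num
        have h3 : Tendsto (fun ε : ℝ => ‖u t‖ * min 2 (2 * Real.pi * ε * (C * Φ t)))
            (nhdsWithin 0 (Set.Ioi 0))
            (𝓝 (‖u t‖ * min 2 (2 * Real.pi * (0:ℝ) * (C * Φ t)))) :=
          (hcont.tendsto 0).mono_left nhdsWithin_le_nhds
        rw [h0] at h3
        exact h3
      have hg : Continuous fun x : ℝ => ((‖x‖₊ : ℝ≥0) : ℝ≥0∞) ^ q :=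
        ENNReal.continuous_rpow_const.comp (ENNReal.continuous_coe.comp continuous_nnnorm)
      have := (hg.tendsto 0).comp hc
      simpa [ENNReal.zero_rpow_of_pos hq, Function.comp_def] using this
  -- conclude
  have hfin : Tendsto (fun ε : ℝ => eLpNorm (H ε) p volume)
      (nhdsWithin 0 (Set.Ioi 0)) (𝓝 0) := by
    have hrw : ∀ ε : ℝ, eLpNorm (H ε) p volume
        = (∫⁻ t, ((‖H ε t‖₊ : ℝ≥0) : ℝ≥0∞) ^ q) ^ (1/q) := fun ε =>
      eLpNorm_eq_lintegral_rpow_enorm_toReal hp0 hp'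
    simp_rw [hrw]
    have htd := ((ENNReal.continuous_rpow_const (y := 1/q)).tendsto 0).comp hlim
    have h0 : ((0:ℝ≥0∞)) ^ (1/q) = 0 := ENNReal.zero_rpow_of_pos (by positivity)
    rw [h0] at htd
    exact htd
  refine tendsto_of_tendsto_of_tendsto_of_le_of_le' tendsto_const_nhds hfin
    (Eventually.of_forall fun ε => zero_le) ?_
  filter_upwards [self_mem_nhdsWithin] with ε hε
  exact hmono ε hε
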